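/- Let $A\in\mathbb{R}$, let $T\in\mathbb{R}\cup\{+\infty\}$, and let $F:(-\infty,T)\to\mathbb{R}$ be twice differentiable with $F''(t)=F'(t)+A\,F'(t)^2$ and $F'(t)>0$ for all $t<T$, and $\lim_{t\to-\infty}F(t)=0$. Then there exists $K>0$ such that: if $A=0$, then $F(t)=K e^{t}$ for all $t<T$; and if $A\neq 0$, then $1-AKe^{t}>0$ and $F(t)=-\tfrac{1}{A}\log(1-AKe^{t})$ for all $t<T$. -/

import Mathlib

open Real Filter Set

lemma constOnAux {S : Set ℝ} (hlow : ∀ ⦃a b : ℝ⦄, a ∈ S → b ≤ a → b ∈ S)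
    {g : ℝ → ℝ} (hg : ∀ t ∈ S, HasDerivAt g 0 t) :
    ∀ a ∈ S, ∀ b ∈ S, g b = g a := by
  have key : ∀ a ∈ S, ∀ b ∈ S, a ≤ b → g b = g a := by
    intro a ha b hb hab
    have hsub : Icc a b ⊆ S := fun x hx => hlow hb hx.2
    have hcont : ContinuousOn g (Icc a b) := fun x hx =>
      ((hg x (hsub hx)).differentiableAt.continuousAt).continuousWithinAt
    have := constant_of_has_deriv_right_zero hcont (fun x hx =>
      (hg x (hsub (Ico_subset_Icc_self hx))).hasDerivWithinAt)
    exact this b (right_mem_Icc.2 hab)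
  intro a ha b hb
  rcases le_total a b with h | h
  · exact key a ha b hb h
  · exact (key b hb a ha h).symm

/-- solving the ODE `F'' = F' + A (F')²` with `F' > 0` on `(-∞, T)`
(where `T ∈ ℝ ∪ {+∞}` is encoded as an `EReal` different from `-∞`) and
`F(t) → 0` as `t → -∞`. -/
theorem stmt_7 (A : ℝ) (T : EReal) (hT : T ≠ ⊥) (F : ℝ → ℝ)
    (hF1 : ∀ t : ℝ, (t : EReal) < T → DifferentiableAt ℝ F t)
    (hF2 : ∀ t : ℝ, (t : EReal) < T → DifferentiableAt ℝ (deriv F) t)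
    (hode : ∀ t : ℝ, (t : EReal) < T →
      deriv (deriv F) t = deriv F t + A * (deriv F t) ^ 2)
    (hpos : ∀ t : ℝ, (t : EReal) < T → 0 < deriv F t)
    (hlim : Tendsto F atBot (nhds 0)) :
    ∃ K : ℝ, 0 < K ∧
      (A = 0 → ∀ t : ℝ, (t : EReal) < T → F t = K * Real.exp t) ∧
      (A ≠ 0 → ∀ t : ℝ, (t : EReal) < T →
        0 < 1 - A * K * Real.exp t ∧
        F t = -(1 / A) * Real.log (1 - A * K * Real.exp t)) := by
  set S : Set ℝ := {t : ℝ | (t : EReal) < T} with hS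
  have hlow : ∀ ⦃a b : ℝ⦄, a ∈ S → b ≤ a → b ∈ S := fun a b ha hba =>
    lt_of_le_of_lt (EReal.coe_le_coe_iff.2 hba) ha
  obtain ⟨t0, ht0⟩ : ∃ t0 : ℝ, t0 ∈ S := by
    induction T using EReal.rec with
    | bot => exact absurd rfl hT
    | coe r => exact ⟨r - 1, by show ((r-1:ℝ):EReal) < (r:EReal); exact_mod_cast sub_one_lt r⟩
    | top => exact ⟨0, by simp [hS]⟩
  have hevS : ∀ᶠ t in atBot, t ∈ S :=
    (eventually_le_atBot t0).mono fun t ht => hlow ht0 ht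
  set x : ℝ → ℝ := deriv F with hx
  have hexp : ∀ t : ℝ, HasDerivAt (fun t : ℝ => Real.exp (-t)) (-Real.exp (-t)) t := by
    intro t
    have h1 : HasDerivAt (fun t : ℝ => -t) (-1) t := (hasDerivAt_id t).neg
    have := h1.exp
    convert this using 1
    ring
  rcases eq_or_ne A 0 with hA | hA
  · -- case A = 0
    subst hA
    have hx' : ∀ t ∈ S, HasDerivAt x (x t) t := by
      intro t ht
      have h := (hF2 t ht).hasDerivAt
      rw [hode t ht] at h
      simpa using h
    have hg : ∀ t ∈ S, HasDerivAt (fun t => x t * Real.exp (-t)) 0 t := by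
      intro t ht
      have := (hx' t ht).mul (hexp t)
      exact this.congr_deriv (by ring)
    have hgc := constOnAux hlow hg t0 ht0
    set c : ℝ := x t0 * Real.exp (-t0) with hc
    have hcpos : 0 < c := mul_pos (hpos t0 ht0) (Real.exp_pos _)
    have hxc : ∀ t ∈ S, x t = c * Real.exp t := by
      intro t ht
      have h := hgc t ht
      have he : Real.exp (-t) ≠ 0 := (Real.exp_pos _).ne'
      field_simp [Real.exp_neg] at h ⊢
      rw [← h, mul_assoc, ← Real.exp_add, neg_add_cancel, Real.exp_zero, mul_one]
    have hh : ∀ t ∈ S, HasDerivAt (fun t => F t - c * Real.exp t) 0 t := by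
      intro t ht
      have := (hF1 t ht).hasDerivAt.sub ((Real.hasDerivAt_exp t).const_mul c)
      rw [show deriv F t = x t from rfl] at this
      rw [hxc t ht] at this
      exact this.congr_deriv (by simp)
    have hhc := constOnAux hlow hh t0 ht0
    set d : ℝ := F t0 - c * Real.exp t0 with hd
    have htend : Tendsto (fun t => F t - c * Real.exp t) atBot (nhds 0) := by
      have h2 : Tendsto (fun t : ℝ => c * Real.exp t) atBot (nhds (c * 0)) :=
        Real.tendsto_exp_atBot.const_mul c
      have := hlim.sub h2
      simpa using this
    have hev : (fun t => F t - c * Real.exp t) =ᶠ[atBot] fun _ => d :=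
      hevS.mono fun t ht => hhc t ht
    have hd0 : d = 0 := tendsto_nhds_unique tendsto_const_nhds (htend.congr' hev)
    refine ⟨c, hcpos, fun _ t ht => ?_, fun h0 => absurd rfl h0⟩
    have := hhc t ht
    rw [hd0] at this
    linarith
  · -- case A ≠ 0
    set H : ℝ → ℝ := fun t => Real.exp (-(A * F t)) with hH
    have hHd : ∀ t ∈ S, HasDerivAt H (H t * -(A * x t)) t := by
      intro t ht
      exact (((hF1 t ht).hasDerivAt.const_mul A).neg).exp
    set Hd : ℝ → ℝ := fun t => H t * -(A * x t) with hHddef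
    have hHd' : ∀ t ∈ S, HasDerivAt Hd (Hd t) t := by
      intro t ht
      have := (hHd t ht).mul (((hF2 t ht).hasDerivAt.const_mul A).neg)
      refine this.congr_deriv ?_
      rw [hode t ht]
      show H t * -(A * x t) * -(A * x t) + H t * -(A * (x t + A * x t ^ 2)) = H t * -(A * x t)
      ring
    have hg : ∀ t ∈ S, HasDerivAt (fun t => Hd t * Real.exp (-t)) 0 t := by
      intro t ht
      have := (hHd' t ht).mul (hexp t)
      exact this.congr_deriv (by ring)
    have hgc := constOnAux hlow hg t0 ht0
    set c : ℝ := Hd t0 * Real.exp (-t0) with hc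
    have hHdc : ∀ t ∈ S, Hd t = c * Real.exp t := by
      intro t ht
      have h := hgc t ht
      field_simp [Real.exp_neg] at h ⊢
      rw [← h, mul_assoc, ← Real.exp_add, neg_add_cancel, Real.exp_zero, mul_one]
    have hh : ∀ t ∈ S, HasDerivAt (fun t => H t - c * Real.exp t) 0 t := by
      intro t ht
      have := (hHd t ht).sub ((Real.hasDerivAt_exp t).const_mul c)
      rw [show H t * -(A * x t) = Hd t from rfl, hHdc t ht] at this
      exact this.congr_deriv (by simp)
    have hhc := constOnAux hlow hh t0 ht0
    set d : ℝ := H t0 - c * Real.exp t0 with hd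
    have htendH : Tendsto H atBot (nhds 1) := by
      have h1 : Tendsto (fun t => -(A * F t)) atBot (nhds (-(A * 0))) :=
        (hlim.const_mul A).neg
      have h2 := (Real.continuous_exp.tendsto _).comp h1
      simp at h2
      exact h2
    have htend : Tendsto (fun t => H t - c * Real.exp t) atBot (nhds 1) := by
      have h2 : Tendsto (fun t : ℝ => c * Real.exp t) atBot (nhds (c * 0)) :=
        Real.tendsto_exp_atBot.const_mul c
      have := htendH.sub h2
      simpa using this
    have hev : (fun t => H t - c * Real.exp t) =ᶠ[atBot] fun _ => d :=
      hevS.mono fun t ht => hhc t ht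
    have hd1 : d = 1 := tendsto_nhds_unique tendsto_const_nhds (htend.congr' hev)
    set K : ℝ := x t0 * H t0 * Real.exp (-t0) with hK
    have hKpos : 0 < K :=
      mul_pos (mul_pos (hpos t0 ht0) (Real.exp_pos _)) (Real.exp_pos _)
    have hcK : c = -(A * K) := by
      rw [hc, hK, hHddef]
      ring
    have key : ∀ t ∈ S, H t = 1 - A * K * Real.exp t := by
      intro t ht
      have := hhc t ht
      rw [hd1, hcK] at this
      linarith
    refine ⟨K, hKpos, fun h0 => absurd h0 hA, fun _ t ht => ?_⟩
    have hHt := key t ht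
    have hpos' : 0 < 1 - A * K * Real.exp t := hHt ▸ Real.exp_pos _
    refine ⟨hpos', ?_⟩
    have hlog : -(A * F t) = Real.log (1 - A * K * Real.exp t) := by
      rw [← hHt]
      exact (Real.log_exp _).symm
    field_simp
    linarith [hlog]
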